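/- Let σ, x, λ, t ∈ ℂ with |t| < 1, |xt| < 1, and λ t q^m ≠ 1 for all integers m ≥ 0. Then the series ∑_{n=0}^∞ φ_n^{(σ)}(x|q) · (λ;q)_n · t^n/(q;q)_n converges absolutely and its sum equals ((λt;q)_∞/(t;q)_∞) · ₂Φ₁[λ, σ; λt; q; xt]. -/

import Mathlib

noncomputable section

/-- The q-shifted factorial `(a;q)_n`. -/
def qPoch (q a : ℂ) (n : ℕ) : ℂ := ∏ j ∈ Finset.range n, (1 - a * q ^ j)

/-- The infinite q-shifted factorial `(a;q)_∞`. -/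
def qPochInf (q a : ℂ) : ℂ := ∏' j : ℕ, (1 - a * q ^ j)

/-- The q-binomial coefficient `[n k]_q`. -/
def qBinom (q : ℂ) (n k : ℕ) : ℂ := qPoch q q n / (qPoch q q k * qPoch q q (n - k))

/-- The Cauchy polynomials `p_n(x,y)`. -/
def cauchyP (q x y : ℂ) (n : ℕ) : ℂ := ∏ j ∈ Finset.range n, (x - q ^ j * y)

/-- The generalized q-binomial coefficient `[α k]_{-q}`. -/
def genQBinom (q α : ℂ) (k : ℕ) : ℂ :=
  qPoch q (-(q ^ (-α))) k / qPoch q (-q) k * q ^ (α * (k : ℂ) - (k.choose 2 : ℂ))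

/-- The generalized q-polynomials `L̃_n^{(r,s)}(α,x,y,z,a)`. -/
def Ltil (q : ℂ) (r s : ℤ) (α x y z a : ℂ) (n : ℕ) : ℂ :=
  ∑ k ∈ Finset.range (n + 1),
    qBinom q n k * genQBinom q α k *
      q ^ (r * (k.choose 2 : ℤ) - s * ((k + 1).choose 2 : ℤ) + (k.choose 2 : ℤ)) *
      qPoch q a k * cauchyP q x y (n - k) * z ^ k

/-- The basic hypergeometric series `₂Φ₁[a,b;c;q;z]`. -/
def Phi21 (q a b c z : ℂ) : ℂ :=
  ∑' n : ℕ, qPoch q a n * qPoch q b n / (qPoch q c n * qPoch q q n) * z ^ n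

/-- The basic hypergeometric series `₄Φ₃`. -/
def Phi43 (q a₁ a₂ a₃ a₄ b₁ b₂ b₃ z : ℂ) : ℂ :=
  ∑' n : ℕ, qPoch q a₁ n * qPoch q a₂ n * qPoch q a₃ n * qPoch q a₄ n /
    (qPoch q b₁ n * qPoch q b₂ n * qPoch q b₃ n * qPoch q q n) * z ^ n

/-- The trivariate q-polynomials `F_n(x,y,z;q)`. -/
def Ftri (q x y z : ℂ) (n : ℕ) : ℂ :=
  (-1) ^ n * q ^ (-(n.choose 2 : ℤ)) *
    ∑ k ∈ Finset.range (n + 1),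
      qBinom q n k * q ^ (k.choose 2) * (-z) ^ k * cauchyP q y x (n - k)

/-- The Hahn (Al-Salam–Carlitz) polynomials `φ_n^{(σ)}(x|q)`. -/
def hahnPhi (q σ x : ℂ) (n : ℕ) : ℂ :=
  ∑ k ∈ Finset.range (n + 1), qBinom q n k * qPoch q σ k * x ^ k

/-- The q-derivative operator `D_a`. -/
def Dq (q : ℂ) (f : ℂ → ℂ) : ℂ → ℂ := fun a => (f a - f (q * a)) / a

/-- The homogeneous q-difference operator `D_{xy}`. -/
def Dxy (q : ℂ) (f : ℂ → ℂ → ℂ) : ℂ → ℂ → ℂ :=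
  fun x y => (f x (y / q) - f (q * x) y) / (x - y / q)


open Finset Filter Topology

namespace S13

variable {q : ℂ}

lemma qPoch_zero (a : ℂ) : qPoch q a 0 = 1 := by simp [qPoch]

lemma qPoch_succ (a : ℂ) (n : ℕ) :
    qPoch q a (n + 1) = qPoch q a n * (1 - a * q ^ n) := Finset.prod_range_succ _ _

lemma qPoch_add (a : ℂ) (k m : ℕ) :
    qPoch q a (k + m) = qPoch q a k * qPoch q (a * q ^ k) m := by
  rw [qPoch, qPoch, qPoch, Finset.prod_range_add]
  exact congrArg _ (Finset.prod_congr rfl fun j _ => by rw [pow_add]; ring)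

lemma one_sub_ne_zero_of_norm_lt {z : ℂ} (h : ‖z‖ < 1) : 1 - z ≠ 0 := by
  intro h0
  rw [sub_eq_zero] at h0
  rw [← h0] at h
  simp at h

lemma norm_q_pow_le_one (hq1 : ‖q‖ < 1) (j : ℕ) : ‖q‖ ^ j ≤ 1 :=
  pow_le_one₀ (norm_nonneg q) hq1.le

lemma qPoch_q_ne_zero (hq1 : ‖q‖ < 1) (n : ℕ) : qPoch q q n ≠ 0 := by
  rw [qPoch]
  apply Finset.prod_ne_zero_iff.2
  intro j _
  apply one_sub_ne_zero_of_norm_lt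
  rw [norm_mul, norm_pow]
  calc ‖q‖ * ‖q‖ ^ j ≤ ‖q‖ * 1 :=
        mul_le_mul_of_nonneg_left (norm_q_pow_le_one hq1 j) (norm_nonneg q)
    _ < 1 := by rw [mul_one]; exact hq1

lemma geom_partial_le (hq1 : ‖q‖ < 1) (n : ℕ) :
    ∑ j ∈ range n, ‖q‖ ^ j ≤ (1 - ‖q‖)⁻¹ := by
  calc ∑ j ∈ range n, ‖q‖ ^ j ≤ ∑' j : ℕ, ‖q‖ ^ j :=
        Summable.sum_le_tsum _ (fun j _ => pow_nonneg (norm_nonneg q) j)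
          (summable_geometric_of_lt_one (norm_nonneg q) hq1)
    _ = (1 - ‖q‖)⁻¹ := tsum_geometric_of_lt_one (norm_nonneg q) hq1

lemma qPoch_norm_le (hq1 : ‖q‖ < 1) (a : ℂ) (n : ℕ) :
    ‖qPoch q a n‖ ≤ Real.exp (‖a‖ * (1 - ‖q‖)⁻¹) := by
  calc ‖qPoch q a n‖ = ∏ j ∈ range n, ‖1 - a * q ^ j‖ := by rw [qPoch, norm_prod]
    _ ≤ ∏ j ∈ range n, Real.exp (‖a‖ * ‖q‖ ^ j) := by
        apply Finset.prod_le_prod (fun j _ => norm_nonneg _)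
        intro j _
        have h1 : ‖1 - a * q ^ j‖ ≤ 1 + ‖a‖ * ‖q‖ ^ j := by
          refine (norm_sub_le _ _).trans ?_
          simp [norm_mul, norm_pow]
        have h2 := Real.add_one_le_exp (‖a‖ * ‖q‖ ^ j)
        linarith
    _ = Real.exp (∑ j ∈ range n, ‖a‖ * ‖q‖ ^ j) := (Real.exp_sum _ _).symm
    _ ≤ Real.exp (‖a‖ * (1 - ‖q‖)⁻¹) := by
        apply Real.exp_le_exp.2
        rw [← Finset.mul_sum]
        exact mul_le_mul_of_nonneg_left (geom_partial_le hq1 n) (norm_nonneg a)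

lemma one_sub_ge {x c : ℝ} (hx0 : 0 ≤ x) (hxc : x ≤ c) (hc : c < 1) :
    Real.exp (-(x / (1 - c))) ≤ 1 - x := by
  have h1c : (0:ℝ) < 1 - c := by linarith
  set y := x / (1 - c) with hy
  have hy0 : 0 ≤ y := div_nonneg hx0 h1c.le
  have hxy : x = y * (1 - c) := (div_mul_cancel₀ x h1c.ne').symm
  have hexp := Real.add_one_le_exp y
  have hepos : (0:ℝ) < Real.exp y := Real.exp_pos y
  have h1x : (0:ℝ) < 1 - x := by linarith
  have key : 1 ≤ (1 - x) * Real.exp y := by nlinarith [mul_nonneg hy0 (sub_nonneg.2 hxc)]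
  rw [Real.exp_neg]
  rw [inv_le_comm₀ hepos h1x]
  have h2 : (1 - x)⁻¹ * 1 ≤ (1 - x)⁻¹ * ((1 - x) * Real.exp y) :=
    mul_le_mul_of_nonneg_left key (inv_nonneg.2 h1x.le)
  rw [mul_one, ← mul_assoc, inv_mul_cancel₀ h1x.ne', one_mul] at h2
  exact h2

lemma qPoch_norm_ge (hq1 : ‖q‖ < 1) {a : ℂ} (ha : ‖a‖ < 1) (n : ℕ) :
    Real.exp (-(‖a‖ * (1 - ‖q‖)⁻¹ / (1 - ‖a‖))) ≤ ‖qPoch q a n‖ := by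
  have step : ∀ j : ℕ, Real.exp (-(‖a‖ * ‖q‖ ^ j / (1 - ‖a‖))) ≤ ‖1 - a * q ^ j‖ := by
    intro j
    have hx0 : 0 ≤ ‖a‖ * ‖q‖ ^ j := mul_nonneg (norm_nonneg a) (pow_nonneg (norm_nonneg q) j)
    have hxc : ‖a‖ * ‖q‖ ^ j ≤ ‖a‖ := by
      calc ‖a‖ * ‖q‖ ^ j ≤ ‖a‖ * 1 :=
            mul_le_mul_of_nonneg_left (norm_q_pow_le_one hq1 j) (norm_nonneg a)
        _ = ‖a‖ := mul_one _
    calc Real.exp (-(‖a‖ * ‖q‖ ^ j / (1 - ‖a‖))) ≤ 1 - ‖a‖ * ‖q‖ ^ j := one_sub_ge hx0 hxc ha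
      _ = 1 - ‖a * q ^ j‖ := by rw [norm_mul, norm_pow]
      _ ≤ ‖1 - a * q ^ j‖ := by
          have := norm_sub_norm_le (1 : ℂ) (a * q ^ j)
          simpa using this
  calc Real.exp (-(‖a‖ * (1 - ‖q‖)⁻¹ / (1 - ‖a‖)))
      ≤ Real.exp (-(∑ j ∈ range n, ‖a‖ * ‖q‖ ^ j / (1 - ‖a‖))) := by
        apply Real.exp_le_exp.2
        apply neg_le_neg
        rw [← Finset.sum_div, ← Finset.mul_sum]
        apply div_le_div_of_nonneg_right ?_ (by linarith)
        exact mul_le_mul_of_nonneg_left (geom_partial_le hq1 n) (norm_nonneg a)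
    _ = ∏ j ∈ range n, Real.exp (-(‖a‖ * ‖q‖ ^ j / (1 - ‖a‖))) := by
        rw [← Real.exp_sum, ← Finset.sum_neg_distrib]
    _ ≤ ∏ j ∈ range n, ‖1 - a * q ^ j‖ :=
        Finset.prod_le_prod (fun j _ => (Real.exp_pos _).le) (fun j _ => step j)
    _ = ‖qPoch q a n‖ := by rw [qPoch, norm_prod]


variable {q : ℂ}

lemma summable_log (hq1 : ‖q‖ < 1) (a : ℂ) :
    Summable (fun n : ℕ => Complex.log (1 - a * q ^ n)) := by
  apply Summable.of_norm_bounded_eventually_nat (g := fun n => 3 / 2 * (‖a‖ * ‖q‖ ^ n))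
  · exact ((summable_geometric_of_lt_one (norm_nonneg q) hq1).mul_left ‖a‖).mul_left (3 / 2)
  · have htend : Tendsto (fun n : ℕ => ‖a‖ * ‖q‖ ^ n) atTop (𝓝 0) := by
      simpa using (tendsto_pow_atTop_nhds_zero_of_lt_one (norm_nonneg q) hq1).const_mul ‖a‖
    filter_upwards [htend.eventually_le_const (show (0:ℝ) < 1/2 by norm_num)] with n hn
    have hz : ‖-(a * q ^ n)‖ ≤ 1 / 2 := by
      rw [norm_neg, norm_mul, norm_pow]; exact hn
    have := Complex.norm_log_one_add_half_le_self hz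
    rw [show (1 : ℂ) + -(a * q ^ n) = 1 - a * q ^ n by ring] at this
    calc ‖Complex.log (1 - a * q ^ n)‖ ≤ 3 / 2 * ‖-(a * q ^ n)‖ := this
      _ = 3 / 2 * (‖a‖ * ‖q‖ ^ n) := by rw [norm_neg, norm_mul, norm_pow]

lemma hasProd_qPochInf (hq1 : ‖q‖ < 1) (a : ℂ) (h0 : ∀ n : ℕ, 1 - a * q ^ n ≠ 0) :
    HasProd (fun n : ℕ => 1 - a * q ^ n) (qPochInf q a) := by
  exact (Complex.multipliable_of_summable_log (summable_log hq1 a)).hasProd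

lemma qPochInf_ne_zero (hq1 : ‖q‖ < 1) (a : ℂ) (h0 : ∀ n : ℕ, 1 - a * q ^ n ≠ 0) :
    qPochInf q a ≠ 0 := by
  have h := Complex.cexp_tsum_eq_tprod (f := fun n => 1 - a * q ^ n)
    (fun n => h0 n) (summable_log hq1 a)
  rw [qPochInf, ← h]
  exact Complex.exp_ne_zero _

lemma tendsto_qPoch (hq1 : ‖q‖ < 1) (a : ℂ) (h0 : ∀ n : ℕ, 1 - a * q ^ n ≠ 0) :
    Tendsto (fun n => qPoch q a n) atTop (𝓝 (qPochInf q a)) := by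
  have h := (hasProd_qPochInf hq1 a h0).tendsto_prod_nat
  exact h

set_option maxHeartbeats 1000000 in
lemma qPochInf_split (hq1 : ‖q‖ < 1) (a : ℂ) (h0 : ∀ n : ℕ, 1 - a * q ^ n ≠ 0) (k : ℕ) :
    qPochInf q a = qPoch q a k * qPochInf q (a * q ^ k) := by
  have h0' : ∀ n : ℕ, 1 - a * q ^ k * q ^ n ≠ 0 := by
    intro n
    have := h0 (k + n)
    rwa [pow_add, ← mul_assoc] at this
  have h2 := hasProd_qPochInf hq1 (a * q ^ k) h0'
  have h3 : HasProd (fun n : ℕ => 1 - a * q ^ (n + k)) (qPochInf q (a * q ^ k)) := by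
    rw [show (fun n : ℕ => 1 - a * q ^ (n + k)) = (fun n : ℕ => 1 - a * q ^ k * q ^ n) from
      funext fun n => by rw [pow_add]; ring]
    exact h2
  have h4 := HasProd.prod_range_mul (f := fun n : ℕ => 1 - a * q ^ n) (k := k)
    (m := qPochInf q (a * q ^ k)) h3
  exact (hasProd_qPochInf hq1 a h0).unique h4

variable {q : ℂ}

/-- coefficient of the q-binomial series -/
def qbCoef (q a : ℂ) (n : ℕ) : ℂ := qPoch q a n / qPoch q q n

/-- the q-binomial series -/
def qbF (q a s : ℂ) : ℂ := ∑' n : ℕ, qbCoef q a n * s ^ n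

/-- uniform bound for the coefficients -/
def qbB (q a : ℂ) : ℝ :=
  Real.exp (‖a‖ * (1 - ‖q‖)⁻¹) * Real.exp (‖q‖ * (1 - ‖q‖)⁻¹ / (1 - ‖q‖))

lemma qbB_pos (q a : ℂ) : 0 < qbB q a := mul_pos (Real.exp_pos _) (Real.exp_pos _)

lemma qbCoef_norm_le (hq1 : ‖q‖ < 1) (a : ℂ) (n : ℕ) : ‖qbCoef q a n‖ ≤ qbB q a := by
  have hden := qPoch_norm_ge hq1 hq1 n
  have hnum := qPoch_norm_le hq1 a n
  have hepos : (0:ℝ) < Real.exp (-(‖q‖ * (1 - ‖q‖)⁻¹ / (1 - ‖q‖))) := Real.exp_pos _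
  rw [qbCoef, norm_div]
  calc ‖qPoch q a n‖ / ‖qPoch q q n‖
      ≤ Real.exp (‖a‖ * (1 - ‖q‖)⁻¹) / Real.exp (-(‖q‖ * (1 - ‖q‖)⁻¹ / (1 - ‖q‖))) :=
        div_le_div₀ (Real.exp_pos _).le hnum hepos hden
    _ = qbB q a := by rw [Real.exp_neg, qbB, div_eq_mul_inv, inv_inv]

lemma summable_qb_norm (hq1 : ‖q‖ < 1) (a : ℂ) {s : ℂ} (hs : ‖s‖ < 1) :
    Summable (fun n : ℕ => ‖qbCoef q a n * s ^ n‖) := by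
  refine Summable.of_nonneg_of_le (f := fun n : ℕ => qbB q a * ‖s‖ ^ n)
    (fun n => norm_nonneg _) (fun n => ?_)
    ((summable_geometric_of_lt_one (norm_nonneg s) hs).mul_left _)
  rw [norm_mul, norm_pow]
  exact mul_le_mul_of_nonneg_right (qbCoef_norm_le hq1 a n)
    (pow_nonneg (norm_nonneg s) n)

lemma summable_qb (hq1 : ‖q‖ < 1) (a : ℂ) {s : ℂ} (hs : ‖s‖ < 1) :
    Summable (fun n : ℕ => qbCoef q a n * s ^ n) :=
  Summable.of_norm (f := fun n : ℕ => qbCoef q a n * s ^ n) (summable_qb_norm hq1 a hs)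

lemma qbCoef_zero (a : ℂ) : qbCoef q a 0 = 1 := by simp [qbCoef, qPoch_zero]

lemma qbCoef_rec (hq1 : ‖q‖ < 1) (a : ℂ) (n : ℕ) :
    qbCoef q a (n + 1) * (1 - q ^ (n + 1)) = qbCoef q a n * (1 - a * q ^ n) := by
  have hden : qPoch q q n ≠ 0 := qPoch_q_ne_zero hq1 n
  have h1 : 1 - q * q ^ n ≠ 0 := by
    apply one_sub_ne_zero_of_norm_lt
    rw [norm_mul, norm_pow]
    calc ‖q‖ * ‖q‖ ^ n ≤ ‖q‖ * 1 :=
          mul_le_mul_of_nonneg_left (norm_q_pow_le_one hq1 n) (norm_nonneg q)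
      _ < 1 := by rw [mul_one]; exact hq1
  rw [qbCoef, qbCoef, qPoch_succ, qPoch_succ]
  rw [show (1 : ℂ) - q ^ (n + 1) = 1 - q * q ^ n by rw [pow_succ]; ring]
  rw [div_mul_eq_mul_div, div_mul_eq_mul_div, div_eq_div_iff (mul_ne_zero hden h1) hden]
  ring

lemma norm_q_pow_mul_lt (hq1 : ‖q‖ < 1) {t : ℂ} (ht : ‖t‖ < 1) (N : ℕ) :
    ‖q ^ N * t‖ < 1 := by
  rw [norm_mul, norm_pow]
  calc ‖q‖ ^ N * ‖t‖ ≤ 1 * ‖t‖ :=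
        mul_le_mul_of_nonneg_right (norm_q_pow_le_one hq1 N) (norm_nonneg t)
    _ < 1 := by rw [one_mul]; exact ht

lemma qb_funct_eq (hq1 : ‖q‖ < 1) (a : ℂ) {s : ℂ} (hs : ‖s‖ < 1) :
    (1 - s) * qbF q a s = (1 - a * s) * qbF q a (q * s) := by
  have hqs : ‖q * s‖ < 1 := by
    have := norm_q_pow_mul_lt hq1 hs 1
    rwa [pow_one] at this
  have S1 : Summable (fun n : ℕ => qbCoef q a n * s ^ n) := summable_qb hq1 a hs
  have S2 : Summable (fun n : ℕ => qbCoef q a n * (q * s) ^ n) := summable_qb hq1 a hqs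
  have S3 : Summable (fun n : ℕ => qbCoef q a n * s ^ (n + 1)) := by
    have := S1.mul_right s
    apply this.congr
    intro n
    rw [pow_succ]; ring
  have S4 : Summable (fun n : ℕ => a * qbCoef q a n * q ^ n * s ^ (n + 1)) := by
    have := S2.mul_right (a * s)
    apply this.congr
    intro n
    rw [pow_succ, mul_pow]; ring
  have hg : Summable (fun n : ℕ => qbCoef q a n * s ^ n - qbCoef q a n * (q * s) ^ n) := S1.sub S2
  have hh : Summable (fun n : ℕ => qbCoef q a n * s ^ (n + 1) - a * qbCoef q a n * q ^ n * s ^ (n + 1)) := S3.sub S4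
  have key : (∑' n : ℕ, (qbCoef q a n * s ^ n - qbCoef q a n * (q * s) ^ n)) =
      ∑' n : ℕ, (qbCoef q a n * s ^ (n + 1) - a * qbCoef q a n * q ^ n * s ^ (n + 1)) := by
    rw [hg.tsum_eq_zero_add]
    have h00 : qbCoef q a 0 * s ^ 0 - qbCoef q a 0 * (q * s) ^ 0 = 0 := by simp
    rw [h00, zero_add]
    apply tsum_congr
    intro n
    have hrec := qbCoef_rec hq1 a n
    calc qbCoef q a (n + 1) * s ^ (n + 1) - qbCoef q a (n + 1) * (q * s) ^ (n + 1)
        = (qbCoef q a (n + 1) * (1 - q ^ (n + 1))) * s ^ (n + 1) := by rw [mul_pow]; ring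
      _ = (qbCoef q a n * (1 - a * q ^ n)) * s ^ (n + 1) := by rw [hrec]
      _ = qbCoef q a n * s ^ (n + 1) - a * qbCoef q a n * q ^ n * s ^ (n + 1) := by ring
  have e1 : qbF q a s - qbF q a (q * s) = ∑' n : ℕ, (qbCoef q a n * s ^ n - qbCoef q a n * (q * s) ^ n) :=
    (S1.tsum_sub S2).symm
  have e2 : s * qbF q a s = ∑' n : ℕ, qbCoef q a n * s ^ (n + 1) := by
    rw [qbF, ← tsum_mul_left]
    apply tsum_congr
    intro n
    rw [pow_succ]; ring
  have e3 : a * s * qbF q a (q * s) = ∑' n : ℕ, a * qbCoef q a n * q ^ n * s ^ (n + 1) := by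
    rw [qbF, ← tsum_mul_left]
    apply tsum_congr
    intro n
    rw [pow_succ, mul_pow]; ring
  have e4 : s * qbF q a s - a * s * qbF q a (q * s) =
      ∑' n : ℕ, (qbCoef q a n * s ^ (n + 1) - a * qbCoef q a n * q ^ n * s ^ (n + 1)) := by
    rw [e2, e3]
    exact (S3.tsum_sub S4).symm
  have hfin := e1.trans (key.trans e4.symm)
  linear_combination hfin

lemma qb_iter (hq1 : ‖q‖ < 1) (a : ℂ) {t : ℂ} (ht : ‖t‖ < 1) (N : ℕ) :
    qPoch q t N * qbF q a t = qPoch q (a * t) N * qbF q a (q ^ N * t) := by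
  induction N with
  | zero => simp [qPoch_zero]
  | succ N ih =>
    have hs : ‖q ^ N * t‖ < 1 := norm_q_pow_mul_lt hq1 ht N
    have fe := qb_funct_eq hq1 a hs
    rw [show q * (q ^ N * t) = q ^ (N + 1) * t by rw [pow_succ]; ring] at fe
    rw [qPoch_succ, qPoch_succ]
    calc qPoch q t N * (1 - t * q ^ N) * qbF q a t
        = (qPoch q t N * qbF q a t) * (1 - t * q ^ N) := by ring
      _ = (qPoch q (a * t) N * qbF q a (q ^ N * t)) * (1 - t * q ^ N) := by rw [ih]
      _ = qPoch q (a * t) N * ((1 - q ^ N * t) * qbF q a (q ^ N * t)) := by ring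
      _ = qPoch q (a * t) N * ((1 - a * (q ^ N * t)) * qbF q a (q ^ (N + 1) * t)) := by rw [fe]
      _ = qPoch q (a * t) N * (1 - a * t * q ^ N) * qbF q a (q ^ (N + 1) * t) := by ring

lemma qb_tendsto_one (hq1 : ‖q‖ < 1) (a : ℂ) {t : ℂ} (ht : ‖t‖ < 1) :
    Tendsto (fun N : ℕ => qbF q a (q ^ N * t)) atTop (𝓝 1) := by
  have key : ∀ s : ℂ, ‖s‖ ≤ ‖t‖ →
      ‖qbF q a s - 1‖ ≤ qbB q a * (1 - ‖t‖)⁻¹ * ‖s‖ := by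
    intro s hst
    have hs : ‖s‖ < 1 := lt_of_le_of_lt hst ht
    have S1 : Summable (fun n : ℕ => qbCoef q a n * s ^ n) := summable_qb hq1 a hs
    have hshift : qbF q a s - 1 = ∑' n : ℕ, qbCoef q a (n + 1) * s ^ (n + 1) := by
      rw [qbF, S1.tsum_eq_zero_add, qbCoef_zero]
      simp
    have hb : ∀ n : ℕ, ‖qbCoef q a (n + 1) * s ^ (n + 1)‖ ≤ qbB q a * ‖s‖ * ‖t‖ ^ n := by
      intro n
      rw [norm_mul, norm_pow, pow_succ]
      calc ‖qbCoef q a (n + 1)‖ * (‖s‖ ^ n * ‖s‖)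
          ≤ qbB q a * (‖t‖ ^ n * ‖s‖) := by
            apply mul_le_mul (qbCoef_norm_le hq1 a _)
            · exact mul_le_mul_of_nonneg_right (pow_le_pow_left₀ (norm_nonneg s) hst n)
                (norm_nonneg s)
            · positivity
            · exact (qbB_pos q a).le
        _ = qbB q a * ‖s‖ * ‖t‖ ^ n := by ring
    have hsum : Summable (fun n : ℕ => qbB q a * ‖s‖ * ‖t‖ ^ n) :=
      (summable_geometric_of_lt_one (norm_nonneg t) ht).mul_left _
    have hsum2 : Summable (fun n : ℕ => ‖qbCoef q a (n + 1) * s ^ (n + 1)‖) :=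
      Summable.of_nonneg_of_le (f := fun n : ℕ => qbB q a * ‖s‖ * ‖t‖ ^ n)
        (fun n => norm_nonneg _) hb hsum
    rw [hshift]
    calc ‖∑' n : ℕ, qbCoef q a (n + 1) * s ^ (n + 1)‖
        ≤ ∑' n : ℕ, ‖qbCoef q a (n + 1) * s ^ (n + 1)‖ := norm_tsum_le_tsum_norm hsum2
      _ ≤ ∑' n : ℕ, qbB q a * ‖s‖ * ‖t‖ ^ n := hsum2.tsum_le_tsum hb hsum
      _ = qbB q a * ‖s‖ * (1 - ‖t‖)⁻¹ := by
          rw [tsum_mul_left, tsum_geometric_of_lt_one (norm_nonneg t) ht]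
      _ = qbB q a * (1 - ‖t‖)⁻¹ * ‖s‖ := by ring
  have hz : Tendsto (fun N : ℕ => qbF q a (q ^ N * t) - 1) atTop (𝓝 0) := by
    have hbd : ∀ N : ℕ, ‖qbF q a (q ^ N * t) - 1‖ ≤ qbB q a * (1 - ‖t‖)⁻¹ * ‖t‖ * ‖q‖ ^ N := by
      intro N
      have hle : ‖q ^ N * t‖ ≤ ‖t‖ := by
        rw [norm_mul, norm_pow]
        calc ‖q‖ ^ N * ‖t‖ ≤ 1 * ‖t‖ :=
              mul_le_mul_of_nonneg_right (norm_q_pow_le_one hq1 N) (norm_nonneg t)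
          _ = ‖t‖ := one_mul _
      calc ‖qbF q a (q ^ N * t) - 1‖ ≤ qbB q a * (1 - ‖t‖)⁻¹ * ‖q ^ N * t‖ :=
            key _ hle
        _ = qbB q a * (1 - ‖t‖)⁻¹ * ‖t‖ * ‖q‖ ^ N := by
            rw [norm_mul, norm_pow]; ring
    have htd : Tendsto (fun N : ℕ => qbB q a * (1 - ‖t‖)⁻¹ * ‖t‖ * ‖q‖ ^ N) atTop (𝓝 0) := by
      simpa using (tendsto_pow_atTop_nhds_zero_of_lt_one (norm_nonneg q) hq1).const_mul
        (qbB q a * (1 - ‖t‖)⁻¹ * ‖t‖)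
    exact squeeze_zero_norm hbd htd
  have := hz.add_const 1
  simpa using this

theorem qbinom (hq1 : ‖q‖ < 1) (a : ℂ) {t : ℂ} (ht : ‖t‖ < 1)
    (h0 : ∀ n : ℕ, 1 - a * t * q ^ n ≠ 0) :
    qbF q a t = qPochInf q (a * t) / qPochInf q t := by
  have h0t : ∀ n : ℕ, 1 - t * q ^ n ≠ 0 := by
    intro n
    apply one_sub_ne_zero_of_norm_lt
    rw [norm_mul, norm_pow]
    calc ‖t‖ * ‖q‖ ^ n ≤ ‖t‖ * 1 :=
          mul_le_mul_of_nonneg_left (norm_q_pow_le_one hq1 n) (norm_nonneg t)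
      _ ≤ ‖t‖ := by rw [mul_one]
      _ < 1 := ht
  have l1 : Tendsto (fun N : ℕ => qPoch q t N * qbF q a t) atTop
      (𝓝 (qPochInf q t * qbF q a t)) := (tendsto_qPoch hq1 t h0t).mul_const _
  have l2 : Tendsto (fun N : ℕ => qPoch q t N * qbF q a t) atTop
      (𝓝 (qPochInf q (a * t) * 1)) := by
    have : (fun N : ℕ => qPoch q t N * qbF q a t) =
        (fun N : ℕ => qPoch q (a * t) N * qbF q a (q ^ N * t)) :=
      funext fun N => qb_iter hq1 a ht N
    rw [this]
    exact (tendsto_qPoch hq1 (a * t) h0).mul (qb_tendsto_one hq1 a ht)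
  have heq := tendsto_nhds_unique l1 l2
  rw [mul_one] at heq
  rw [eq_div_iff (qPochInf_ne_zero hq1 t h0t)]
  rw [mul_comm] at heq
  exact heq


/-- the double-sum term -/
def Fd (q lam sig x t : ℂ) (p : ℕ × ℕ) : ℂ :=
  qPoch q lam (p.1 + p.2) * qPoch q sig p.1 * x ^ p.1 * t ^ (p.1 + p.2) /
    (qPoch q q p.1 * qPoch q q p.2)

/-- lower bound constant for `(q;q)_n` -/
def cqc (q : ℂ) : ℝ := Real.exp (-(‖q‖ * (1 - ‖q‖)⁻¹ / (1 - ‖q‖)))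

lemma cqc_pos (q : ℂ) : 0 < cqc q := Real.exp_pos _

lemma cqc_le (hq1 : ‖q‖ < 1) (n : ℕ) : cqc q ≤ ‖qPoch q q n‖ := qPoch_norm_ge hq1 hq1 n

lemma Fd_norm_le (hq1 : ‖q‖ < 1) (lam sig x t : ℂ) (p : ℕ × ℕ) :
    ‖Fd q lam sig x t p‖ ≤
      Real.exp (‖lam‖ * (1 - ‖q‖)⁻¹) * Real.exp (‖sig‖ * (1 - ‖q‖)⁻¹) / (cqc q * cqc q) *
        (‖x * t‖ ^ p.1 * ‖t‖ ^ p.2) := by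
  obtain ⟨k, m⟩ := p
  have hxt : (‖x‖ * ‖t‖) ^ k * ‖t‖ ^ m = ‖x‖ ^ k * ‖t‖ ^ (k + m) := by
    rw [mul_pow, pow_add]; ring
  rw [Fd]
  simp only [norm_div, norm_mul, norm_pow]
  have hnum : ‖qPoch q lam (k + m)‖ * ‖qPoch q sig k‖ * ‖x‖ ^ k * ‖t‖ ^ (k + m) ≤
      Real.exp (‖lam‖ * (1 - ‖q‖)⁻¹) * Real.exp (‖sig‖ * (1 - ‖q‖)⁻¹) *
        (‖x‖ ^ k * ‖t‖ ^ (k + m)) := by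
    have h1 := qPoch_norm_le hq1 lam (k + m)
    have h2 := qPoch_norm_le hq1 sig k
    have hx : (0:ℝ) ≤ ‖x‖ ^ k * ‖t‖ ^ (k + m) := by positivity
    calc ‖qPoch q lam (k + m)‖ * ‖qPoch q sig k‖ * ‖x‖ ^ k * ‖t‖ ^ (k + m)
        = (‖qPoch q lam (k + m)‖ * ‖qPoch q sig k‖) * (‖x‖ ^ k * ‖t‖ ^ (k + m)) := by ring
      _ ≤ (Real.exp (‖lam‖ * (1 - ‖q‖)⁻¹) * Real.exp (‖sig‖ * (1 - ‖q‖)⁻¹)) *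
            (‖x‖ ^ k * ‖t‖ ^ (k + m)) := by
          apply mul_le_mul_of_nonneg_right _ hx
          exact mul_le_mul h1 h2 (norm_nonneg _) (Real.exp_pos _).le
  have hden : cqc q * cqc q ≤ ‖qPoch q q k‖ * ‖qPoch q q m‖ :=
    mul_le_mul (cqc_le hq1 k) (cqc_le hq1 m) (cqc_pos q).le (norm_nonneg _)
  calc ‖qPoch q lam (k + m)‖ * ‖qPoch q sig k‖ * ‖x‖ ^ k * ‖t‖ ^ (k + m) /
        (‖qPoch q q k‖ * ‖qPoch q q m‖)
      ≤ Real.exp (‖lam‖ * (1 - ‖q‖)⁻¹) * Real.exp (‖sig‖ * (1 - ‖q‖)⁻¹) *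
          (‖x‖ ^ k * ‖t‖ ^ (k + m)) / (cqc q * cqc q) :=
        div_le_div₀ (by positivity) hnum (mul_pos (cqc_pos q) (cqc_pos q)) hden
    _ = Real.exp (‖lam‖ * (1 - ‖q‖)⁻¹) * Real.exp (‖sig‖ * (1 - ‖q‖)⁻¹) / (cqc q * cqc q) *
          ((‖x‖ * ‖t‖) ^ k * ‖t‖ ^ m) := by rw [hxt]; ring

lemma Fd_summable_norm (hq1 : ‖q‖ < 1) (lam sig x t : ℂ)
    (hxt : ‖x * t‖ < 1) (ht : ‖t‖ < 1) :
    Summable (fun p : ℕ × ℕ => ‖Fd q lam sig x t p‖) := by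
  set C := Real.exp (‖lam‖ * (1 - ‖q‖)⁻¹) * Real.exp (‖sig‖ * (1 - ‖q‖)⁻¹) / (cqc q * cqc q)
    with hC
  refine Summable.of_nonneg_of_le (f := fun p : ℕ × ℕ => (C * ‖x * t‖ ^ p.1) * ‖t‖ ^ p.2)
    (fun p => norm_nonneg _) (fun p => ?_) ?_
  · calc ‖Fd q lam sig x t p‖ ≤ C * (‖x * t‖ ^ p.1 * ‖t‖ ^ p.2) := Fd_norm_le hq1 lam sig x t p
      _ = (C * ‖x * t‖ ^ p.1) * ‖t‖ ^ p.2 := by ring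
  · have hC0 : 0 ≤ C := by
      rw [hC]
      have := mul_pos (cqc_pos q) (cqc_pos q)
      positivity
    exact Summable.mul_of_nonneg
      ((summable_geometric_of_lt_one (norm_nonneg _) hxt).mul_left C)
      (summable_geometric_of_lt_one (norm_nonneg t) ht)
      (fun k => by positivity) (fun m => by positivity)


lemma Fd_row (hq1 : ‖q‖ < 1) (sig x lam t : ℂ) (n : ℕ) :
    hahnPhi q sig x n * qPoch q lam n * t ^ n / qPoch q q n =
      ∑ k ∈ range (n + 1), Fd q lam sig x t (k, n - k) := by
  rw [hahnPhi, Finset.sum_mul, Finset.sum_mul, Finset.sum_div]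
  apply Finset.sum_congr rfl
  intro k hk
  have hkn : k ≤ n := Nat.lt_succ_iff.mp (Finset.mem_range.mp hk)
  have hkm : k + (n - k) = n := Nat.add_sub_cancel' hkn
  rw [Fd, qBinom]
  simp only [hkm]
  have h1 : qPoch q q n ≠ 0 := qPoch_q_ne_zero hq1 n
  have h2 : qPoch q q k ≠ 0 := qPoch_q_ne_zero hq1 k
  have h3 : qPoch q q (n - k) ≠ 0 := qPoch_q_ne_zero hq1 (n - k)
  field_simp

lemma Fd_col (hq1 : ‖q‖ < 1) (sig x lam t : ℂ) (ht : ‖t‖ < 1)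
    (hlt : ∀ m : ℕ, lam * t * q ^ m ≠ 1) (k : ℕ) :
    (∑' m : ℕ, Fd q lam sig x t (k, m)) =
      qPochInf q (lam * t) / qPochInf q t *
        (qPoch q lam k * qPoch q sig k / (qPoch q (lam * t) k * qPoch q q k) * (x * t) ^ k) := by
  have h0lt : ∀ n : ℕ, 1 - lam * t * q ^ n ≠ 0 := fun n =>
    sub_ne_zero.mpr fun h => hlt n h.symm
  have h0k : ∀ n : ℕ, 1 - lam * q ^ k * t * q ^ n ≠ 0 := by
    intro n
    have := h0lt (k + n)
    rw [pow_add] at this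
    rw [show lam * q ^ k * t * q ^ n = lam * t * (q ^ k * q ^ n) by ring]
    exact this
  have hA : ∀ m : ℕ, Fd q lam sig x t (k, m) =
      qPoch q lam k * qPoch q sig k * x ^ k * t ^ k / qPoch q q k *
        (qbCoef q (lam * q ^ k) m * t ^ m) := by
    intro m
    rw [Fd]
    simp only
    rw [qPoch_add lam k m, qbCoef, pow_add]
    have h2 : qPoch q q k ≠ 0 := qPoch_q_ne_zero hq1 k
    have h3 : qPoch q q m ≠ 0 := qPoch_q_ne_zero hq1 m
    field_simp
  rw [tsum_congr hA, tsum_mul_left]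
  have hqb := qbinom hq1 (lam * q ^ k) ht h0k
  rw [show (∑' m : ℕ, qbCoef q (lam * q ^ k) m * t ^ m) = qbF q (lam * q ^ k) t from rfl, hqb]
  rw [show lam * q ^ k * t = lam * t * q ^ k by ring]
  have hsplit := qPochInf_split hq1 (lam * t) h0lt k
  have hpk : qPoch q (lam * t) k ≠ 0 := by
    rw [qPoch]
    exact Finset.prod_ne_zero_iff.2 fun j _ => h0lt j
  have h2 : qPoch q q k ≠ 0 := qPoch_q_ne_zero hq1 k
  have h0t : ∀ n : ℕ, 1 - t * q ^ n ≠ 0 := by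
    intro n
    apply one_sub_ne_zero_of_norm_lt
    rw [norm_mul, norm_pow]
    calc ‖t‖ * ‖q‖ ^ n ≤ ‖t‖ * 1 :=
          mul_le_mul_of_nonneg_left (norm_q_pow_le_one hq1 n) (norm_nonneg t)
      _ ≤ ‖t‖ := by rw [mul_one]
      _ < 1 := ht
  have hit : qPochInf q t ≠ 0 := qPochInf_ne_zero hq1 t h0t
  rw [hsplit, mul_pow]
  field_simp


end S13

set_option maxHeartbeats 2000000 in
/-- Srivastava–Agarwal type generating function for Hahn polynomials. -/
theorem stmt13 (q : ℂ) (hq0 : q ≠ 0) (hq1 : ‖q‖ < 1) (σ x lam t : ℂ)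
    (ht : ‖t‖ < 1) (hxt : ‖x * t‖ < 1) (hlt : ∀ m : ℕ, lam * t * q ^ m ≠ 1) :
    Summable (fun n : ℕ => ‖hahnPhi q σ x n * qPoch q lam n * t ^ n / qPoch q q n‖) ∧
    ∑' n : ℕ, hahnPhi q σ x n * qPoch q lam n * t ^ n / qPoch q q n =
      qPochInf q (lam * t) / qPochInf q t * Phi21 q lam σ (lam * t) (x * t) := by
  classical
  have hFn : Summable (fun p : ℕ × ℕ => ‖S13.Fd q lam σ x t p‖) :=
    S13.Fd_summable_norm hq1 lam σ x t hxt ht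
  have hF : Summable (S13.Fd q lam σ x t) :=
    Summable.of_norm (f := S13.Fd q lam σ x t) hFn
  set e : (Σ n : ℕ, Finset.HasAntidiagonal.antidiagonal n) ≃ ℕ × ℕ := Finset.HasAntidiagonal.sigmaAntidiagonalEquivProd
    with he
  have hsigN : Summable (fun y : Σ n : ℕ, Finset.HasAntidiagonal.antidiagonal n =>
      ‖S13.Fd q lam σ x t (e y)‖) := e.summable_iff.mpr hFn
  have hsig : Summable (fun y : Σ n : ℕ, Finset.HasAntidiagonal.antidiagonal n =>
      S13.Fd q lam σ x t (e y)) := e.summable_iff.mpr hF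
  have hrowsumN : Summable (fun n : ℕ => ∑' p : Finset.HasAntidiagonal.antidiagonal n,
      ‖S13.Fd q lam σ x t (p : ℕ × ℕ)‖) :=
    ((summable_sigma_of_nonneg (fun _ => norm_nonneg _)).mp hsigN).2
  have hinner : ∀ n : ℕ, (∑' p : Finset.HasAntidiagonal.antidiagonal n,
      ‖S13.Fd q lam σ x t (p : ℕ × ℕ)‖) =
      ∑ k ∈ Finset.range (n + 1), ‖S13.Fd q lam σ x t (k, n - k)‖ := by
    intro n
    exact (Finset.tsum_subtype (Finset.HasAntidiagonal.antidiagonal n)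
      (fun p => ‖S13.Fd q lam σ x t p‖)).trans
      (Finset.Nat.sum_antidiagonal_eq_sum_range_succ_mk _ n)
  have hrowsumN' : Summable (fun n : ℕ =>
      ∑ k ∈ Finset.range (n + 1), ‖S13.Fd q lam σ x t (k, n - k)‖) := by
    apply hrowsumN.congr
    intro n
    exact hinner n
  constructor
  · refine Summable.of_nonneg_of_le
      (f := fun n : ℕ => ∑ k ∈ Finset.range (n + 1), ‖S13.Fd q lam σ x t (k, n - k)‖)
      (fun n => norm_nonneg _) (fun n => ?_) hrowsumN'
    rw [S13.Fd_row hq1 σ x lam t n]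
    exact norm_sum_le _ _
  · calc ∑' n : ℕ, hahnPhi q σ x n * qPoch q lam n * t ^ n / qPoch q q n
        = ∑' n : ℕ, ∑ k ∈ Finset.range (n + 1), S13.Fd q lam σ x t (k, n - k) :=
          tsum_congr (S13.Fd_row hq1 σ x lam t)
      _ = ∑' n : ℕ, ∑' p : Finset.HasAntidiagonal.antidiagonal n, S13.Fd q lam σ x t (p : ℕ × ℕ) := by
          apply tsum_congr
          intro n
          exact ((Finset.tsum_subtype (Finset.HasAntidiagonal.antidiagonal n)
            (fun p => S13.Fd q lam σ x t p)).trans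
            (Finset.Nat.sum_antidiagonal_eq_sum_range_succ_mk _ n)).symm
      _ = ∑' y : Σ n : ℕ, Finset.HasAntidiagonal.antidiagonal n, S13.Fd q lam σ x t (e y) :=
          hsig.tsum_sigma.symm
      _ = ∑' p : ℕ × ℕ, S13.Fd q lam σ x t p := e.tsum_eq _
      _ = ∑' k : ℕ, ∑' m : ℕ, S13.Fd q lam σ x t (k, m) := hF.tsum_prod
      _ = ∑' k : ℕ, qPochInf q (lam * t) / qPochInf q t *
            (qPoch q lam k * qPoch q σ k / (qPoch q (lam * t) k * qPoch q q k) * (x * t) ^ k) :=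
          tsum_congr (S13.Fd_col hq1 σ x lam t ht hlt)
      _ = qPochInf q (lam * t) / qPochInf q t * Phi21 q lam σ (lam * t) (x * t) := by
          rw [tsum_mul_left, Phi21]

end
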